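/- Let n ≥ 4, let s be an integer with 0 ≤ s ≤ n-1, and let a_1, a_2 > 0 be reals with a_1 ≠ a_2 such that F4(a_1,s) = F4(a_2,s) = F81(a_1,s) = F81(a_2,s) = F82(a_1,s) = F82(a_2,s) = 0. Then n = 6s - 3. -/

import Mathlib

/-- `F4(a,s) = a^4 + s - 6a^2 s/(n-1) - 3s(s-1)/(n-1)`. -/
noncomputable def F4 (n : ℕ) (a : ℝ) (s : ℕ) : ℝ :=
  a ^ 4 + s - 6 * a ^ 2 * s / ((n : ℝ) - 1) - 3 * s * ((s : ℝ) - 1) / ((n : ℝ) - 1)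

/-- `F81(a,s) = a^8 + s - 28(a^6+a^2+s-1)s/(n-1) + 70(a^4+(s-1)/2)s/(n-1)`. -/
noncomputable def F81 (n : ℕ) (a : ℝ) (s : ℕ) : ℝ :=
  a ^ 8 + s - 28 * (a ^ 6 + a ^ 2 + (s : ℝ) - 1) * s / ((n : ℝ) - 1)
    + 70 * (a ^ 4 + ((s : ℝ) - 1) / 2) * s / ((n : ℝ) - 1)

/-- `F82(a,s) = a^4 + (s-1)/2 - 3(a^4+2a^2+s-2)(s-1)/(n-2)
  + (9/2)(4a^2+s-3)(s-1)(s-2)/((n-2)(n-3))`. -/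
noncomputable def F82 (n : ℕ) (a : ℝ) (s : ℕ) : ℝ :=
  a ^ 4 + ((s : ℝ) - 1) / 2
    - 3 * (a ^ 4 + 2 * a ^ 2 + (s : ℝ) - 2) * ((s : ℝ) - 1) / ((n : ℝ) - 2)
    + (9 / 2) * (4 * a ^ 2 + (s : ℝ) - 3) * ((s : ℝ) - 1) * ((s : ℝ) - 2)
        / (((n : ℝ) - 2) * ((n : ℝ) - 3))

/-- Common zeros of `F4, F81, F82` with equal `s` and distinct `a` force `n = 6s-3`. -/
theorem n_eq_six_s_sub_three (n : ℕ) (hn : 4 ≤ n) (s : ℕ) (hs : s ≤ n - 1)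
    (a₁ a₂ : ℝ) (ha₁ : 0 < a₁) (ha₂ : 0 < a₂) (hne : a₁ ≠ a₂)
    (h4₁ : F4 n a₁ s = 0) (h4₂ : F4 n a₂ s = 0)
    (h81₁ : F81 n a₁ s = 0) (h81₂ : F81 n a₂ s = 0)
    (h82₁ : F82 n a₁ s = 0) (h82₂ : F82 n a₂ s = 0) :
    (n : ℤ) = 6 * s - 3 := by
  have hN : (4:ℝ) ≤ (n:ℝ) := by exact_mod_cast hn
  have h1 : (n:ℝ) - 1 ≠ 0 := by intro h; linarith
  have h2 : (n:ℝ) - 2 ≠ 0 := by intro h; linarith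
  have h3 : (n:ℝ) - 3 ≠ 0 := by intro h; linarith
  simp only [F4] at h4₁ h4₂
  simp only [F82] at h82₁ h82₂
  field_simp at h4₁ h4₂ h82₁ h82₂
  set N : ℝ := (n:ℝ) with hNdef
  set S : ℝ := (s:ℝ) with hSdef
  set C0 : ℝ := 12 - 39/2*S - 9*S^2 + 45/2*S^3 - 17/2*N + 26*N*S - 24*N*S^2
      - 9/2*N*S^3 - 3*N^2 + 6*N^2*S + 3*N^2*S^2 - 1/2*N^3 - 1/2*N^3*S with hC0
  have key₁ : (N-2) * (6*(N-6*S+3)*(N-S-1)*a₁^2 + C0) = 0 := by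
    rw [hC0]
    linear_combination ((N-1)*(N-2)/2) * h82₁ - ((N-2)*((N-2)*(N-3) - 3*(S-1)*(N-3))) * h4₁
  have key₂ : (N-2) * (6*(N-6*S+3)*(N-S-1)*a₂^2 + C0) = 0 := by
    rw [hC0]
    linear_combination ((N-1)*(N-2)/2) * h82₂ - ((N-2)*((N-2)*(N-3) - 3*(S-1)*(N-3))) * h4₂
  have key₁' : 6*(N-6*S+3)*(N-S-1)*a₁^2 + C0 = 0 :=
    (mul_eq_zero.mp key₁).resolve_left h2
  have key₂' : 6*(N-6*S+3)*(N-S-1)*a₂^2 + C0 = 0 :=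
    (mul_eq_zero.mp key₂).resolve_left h2
  have hx : a₁^2 ≠ a₂^2 := by
    intro h
    have hz : (a₁ - a₂) * (a₁ + a₂) = 0 := by linear_combination h
    rcases mul_eq_zero.mp hz with h' | h'
    · exact hne (by linarith)
    · linarith
  have hc1 : 6*(N-6*S+3)*(N-S-1) = 0 := by
    have hz : 6*(N-6*S+3)*(N-S-1) * (a₁^2 - a₂^2) = 0 := by
      linear_combination key₁' - key₂'
    rcases mul_eq_zero.mp hz with h' | h'
    · exact h'
    · exact absurd (sub_eq_zero.mp h') hx
  have hc0 : C0 = 0 := by linear_combination key₁' - a₁^2 * hc1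
  have hfac : (N-6*S+3)*(N-S-1) = 0 := by linear_combination hc1 / 6
  rcases mul_eq_zero.mp hfac with hA | hB
  · have : ((n:ℤ):ℝ) = ((6*(s:ℤ) - 3 : ℤ):ℝ) := by push_cast; linarith
    exact_mod_cast this
  · have hS1 : S = N - 1 := by linarith
    have hz : N*(N-1)*(N-2)*(N-3) = 0 := by
      rw [hC0, hS1] at hc0
      linear_combination (-1/2) * hc0
    have hp : (0:ℝ) < N*(N-1)*(N-2)*(N-3) := by
      have h0 : (0:ℝ) < N := by linarith
      have ha : (0:ℝ) < N - 1 := by linarith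
      have hb : (0:ℝ) < N - 2 := by linarith
      have hc : (0:ℝ) < N - 3 := by linarith
      positivity
    linarith
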